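/- Let F be a tree with at least one edge and m a positive integer. Suppose Y is a tree with s(F,Y) ≡ 0 (mod m). Construct the rooted tree Z by taking Δ(F)+1 disjoint copies of Y, adding a new root r, and joining r by an edge to one vertex of each copy. If a tree T contains an edge {u,v} such that the rooted tree T^{(u,v)} (obtained by rooting T at v and deleting u and its descendants) is isomorphic to Z, then s(F,T) ≡ 0 (mod m). -/

import Mathlib

open SimpleGraph

/-- A subgraph `H` of `G` is a copy of `F` if `H` (as a graph on its vertex set)
is isomorphic to `F`. -/
def SimpleGraph.Subgraph.IsCopyOf {VG VF : Type*} {G : SimpleGraph VG}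
    (H : G.Subgraph) (F : SimpleGraph VF) : Prop :=
  Nonempty (H.coe ≃g F)

/-- An `F`-matching in `G` is a finite set of pairwise vertex-disjoint copies of `F`
in `G`. -/
def IsFMatching {VF VG : Type*} (F : SimpleGraph VF) (G : SimpleGraph VG)
    (M : Finset G.Subgraph) : Prop :=
  (∀ H ∈ M, H.IsCopyOf F) ∧
    (M : Set G.Subgraph).Pairwise fun H K => Disjoint H.verts K.verts

/-- `s(F,G)`: the number of `F`-matchings in `G`. -/
noncomputable def numFMatchings {VF VG : Type*} (F : SimpleGraph VF)
    (G : SimpleGraph VG) : ℕ :=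
  Set.ncard {M : Finset G.Subgraph | IsFMatching F G M}

/-- An induced `F`-matching: an `F`-matching such that no edge of `G` joins two
covered vertices other than the edges of the copies themselves. -/
def IsInducedFMatching {VF VG : Type*} (F : SimpleGraph VF) (G : SimpleGraph VG)
    (M : Finset G.Subgraph) : Prop :=
  IsFMatching F G M ∧
    ∀ a b : VG, G.Adj a b → (∃ H ∈ M, a ∈ H.verts) → (∃ H ∈ M, b ∈ H.verts) →
      ∃ H ∈ M, H.Adj a b

/-- `s'(F,G)`: the number of induced `F`-matchings in `G`. -/
noncomputable def numInducedFMatchings {VF VG : Type*} (F : SimpleGraph VF)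
    (G : SimpleGraph VG) : ℕ :=
  Set.ncard {M : Finset G.Subgraph | IsInducedFMatching F G M}

/-- The nullifying rooted tree `Z` of Lemma 2.2: `D + 1` disjoint copies of `Y`
together with a new root (the vertex `none`), joined by an edge to the vertex
`y₀ i` of the `i`-th copy of `Y`. -/
def nullifyingTree (D : ℕ) {VY : Type*} (Y : SimpleGraph VY)
    (y₀ : Fin (D + 1) → VY) : SimpleGraph (Option (Fin (D + 1) × VY)) :=
  SimpleGraph.fromRel fun a b =>
    match a, b with
    | some (i, y), some (j, y') => i = j ∧ Y.Adj y y'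
    | none, some (i, y) => y = y₀ i
    | _, _ => False

section Transfer
variable {VY VT : Type*} {Y : SimpleGraph VY} {T : SimpleGraph VT}
  (f : VY → VT) (hinj : Function.Injective f)
  (hadj : ∀ a b, T.Adj (f a) (f b) ↔ Y.Adj a b)

open Function

/-- transfer of subgraphs along an induced embedding -/
noncomputable def subTransfer : Y.Subgraph ≃ {H : T.Subgraph // H.verts ⊆ Set.range f} where
  toFun N := ⟨{ verts := f '' N.verts
                Adj := fun x y => ∃ a b, N.Adj a b ∧ x = f a ∧ y = f b
                adj_sub := by
                  rintro x y ⟨a, b, hab, rfl, rfl⟩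
                  exact (hadj a b).mpr (N.adj_sub hab)
                edge_vert := by
                  rintro x y ⟨a, b, hab, rfl, rfl⟩
                  exact ⟨a, N.edge_vert hab, rfl⟩
                symm := by
                  constructor
                  rintro x y ⟨a, b, hab, rfl, rfl⟩
                  exact ⟨b, a, hab.symm, rfl, rfl⟩ },
              by rintro x ⟨a, _, rfl⟩; exact ⟨a, rfl⟩⟩
  invFun H := { verts := f ⁻¹' H.1.verts
                Adj := fun a b => H.1.Adj (f a) (f b)
                adj_sub := fun h => (hadj _ _).mp (H.1.adj_sub h)
                edge_vert := fun h => H.1.edge_vert h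
                symm := ⟨fun _ _ h => h.symm⟩ }
  left_inv N := by
    ext a b
    · exact ⟨fun ⟨a', ha', h⟩ => hinj h ▸ ha', fun h => ⟨a, h, rfl⟩⟩
    · constructor
      · rintro ⟨a', b', h, ha, hb⟩
        rwa [hinj ha, hinj hb]
      · exact fun h => ⟨a, b, h, rfl, rfl⟩
  right_inv H := by
    ext x y
    · constructor
      · rintro ⟨a, ha, rfl⟩; exact ha
      · intro hx
        obtain ⟨a, rfl⟩ := H.2 hx
        exact ⟨a, hx, rfl⟩
    · constructor
      · rintro ⟨a, b, h, rfl, rfl⟩; exact h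
      · intro h
        obtain ⟨a, rfl⟩ := H.2 (H.1.edge_vert h)
        obtain ⟨b, rfl⟩ := H.2 (H.1.edge_vert h.symm)
        exact ⟨a, b, h, rfl, rfl⟩

lemma subTransfer_verts (N : Y.Subgraph) :
    ((subTransfer f hinj hadj N : {H : T.Subgraph // H.verts ⊆ Set.range f}) : T.Subgraph).verts = f '' N.verts := rfl

/-- the transferred subgraph is isomorphic to the original -/
noncomputable def subTransferIso (N : Y.Subgraph) :
    ((subTransfer f hinj hadj N : {H : T.Subgraph // H.verts ⊆ Set.range f}) : T.Subgraph).coe ≃g N.coe where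
  toEquiv := ((Equiv.Set.image f N.verts hinj)).symm
  map_rel_iff' := by
    rintro ⟨x, hx⟩ ⟨y, hy⟩
    obtain ⟨a, ha, rfl⟩ := hx
    obtain ⟨b, hb, rfl⟩ := hy
    have h1 : (Equiv.Set.image f N.verts hinj).symm ⟨f a, ⟨a, ha, rfl⟩⟩ = ⟨a, ha⟩ := by
      rw [Equiv.symm_apply_eq]; rfl
    have h2 : (Equiv.Set.image f N.verts hinj).symm ⟨f b, ⟨b, hb, rfl⟩⟩ = ⟨b, hb⟩ := by
      rw [Equiv.symm_apply_eq]; rfl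
    show N.coe.Adj ((Equiv.Set.image f N.verts hinj).symm _) ((Equiv.Set.image f N.verts hinj).symm _) ↔ _
    erw [h1, h2]
    show N.Adj a b ↔ (∃ a' b', N.Adj a' b' ∧ f a = f a' ∧ f b = f b')
    constructor
    · exact fun h => ⟨a, b, h, rfl, rfl⟩
    · rintro ⟨a', b', h, ha', hb'⟩
      rwa [hinj ha', hinj hb']

end Transfer

section Transfer2
variable {VF VY VT : Type*} {F : SimpleGraph VF} {Y : SimpleGraph VY} {T : SimpleGraph VT}
  (f : VY → VT) (hinj : Function.Injective f)
  (hadj : ∀ a b, T.Adj (f a) (f b) ↔ Y.Adj a b)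

noncomputable def symmIso (x : {H : T.Subgraph // H.verts ⊆ Set.range f}) :
    (x : T.Subgraph).coe ≃g ((subTransfer f hinj hadj).symm x : Y.Subgraph).coe := by
  have h := subTransferIso f hinj hadj ((subTransfer f hinj hadj).symm x)
  rw [Equiv.apply_symm_apply] at h
  exact h

lemma symm_verts (x : {H : T.Subgraph // H.verts ⊆ Set.range f}) :
    ((subTransfer f hinj hadj).symm x : Y.Subgraph).verts = f ⁻¹' (x : T.Subgraph).verts := rfl

noncomputable def matchTransfer :
    {N : Finset Y.Subgraph // IsFMatching F Y N} ≃
      {M : Finset T.Subgraph // IsFMatching F T M ∧ ∀ H ∈ M, H.verts ⊆ Set.range f} := by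
  classical
  let g : Y.Subgraph → T.Subgraph := fun H => (subTransfer f hinj hadj H : T.Subgraph)
  have hg : Function.Injective g := fun a b h =>
    (subTransfer f hinj hadj).injective (Subtype.ext h)
  refine
    { toFun := fun N => ⟨N.1.image g, ?_, ?_⟩
      invFun := fun M => ⟨M.1.attach.image
          (fun x => (subTransfer f hinj hadj).symm ⟨x.1, M.2.2 x.1 x.2⟩), ?_⟩
      left_inv := ?_
      right_inv := ?_ }
  · constructor
    · intro K hK
      obtain ⟨H, hH, rfl⟩ := Finset.mem_image.mp hK
      obtain ⟨φ⟩ := N.2.1 H hH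
      exact ⟨(subTransferIso f hinj hadj H).trans φ⟩
    · intro K hK L hL hne
      obtain ⟨H, hH, rfl⟩ := Finset.mem_image.mp hK
      obtain ⟨H', hH', rfl⟩ := Finset.mem_image.mp hL
      have : H ≠ H' := fun h => hne (by rw [h])
      have hd := N.2.2 hH hH' this
      show Disjoint (f '' H.verts) (f '' H'.verts)
      exact (Set.disjoint_image_iff hinj).mpr hd
  · intro K hK
    obtain ⟨H, hH, rfl⟩ := Finset.mem_image.mp hK
    exact (subTransfer f hinj hadj H).2
  · constructor
    · intro K hK
      obtain ⟨x, hx, rfl⟩ := Finset.mem_image.mp hK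
      obtain ⟨φ⟩ := M.2.1.1 x.1 x.2
      exact ⟨((symmIso f hinj hadj _).symm.trans φ)⟩
    · intro K hK L hL hne
      obtain ⟨x, hx, rfl⟩ := Finset.mem_image.mp hK
      obtain ⟨x', hx', rfl⟩ := Finset.mem_image.mp hL
      have hxx : x.1 ≠ x'.1 := by
        intro h
        exact hne (by rw [Subtype.ext h])
      have hd := M.2.1.2 x.2 x'.2 hxx
      rw [symm_verts, symm_verts]
      exact Disjoint.preimage f hd
  · intro N
    apply Subtype.ext
    ext K
    simp only [Finset.mem_image, Finset.mem_attach, true_and, Subtype.exists]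
    constructor
    · rintro ⟨H, hH, rfl⟩
      obtain ⟨H', hH', rfl⟩ := hH
      have : (⟨g H', (subTransfer f hinj hadj H').2⟩ :
          {H : T.Subgraph // H.verts ⊆ Set.range f}) = subTransfer f hinj hadj H' :=
        Subtype.ext rfl
      rw [this, Equiv.symm_apply_apply]
      exact hH'
    · intro hK
      refine ⟨g K, ⟨K, hK, rfl⟩, ?_⟩
      have : (⟨g K, (subTransfer f hinj hadj K).2⟩ :
          {H : T.Subgraph // H.verts ⊆ Set.range f}) = subTransfer f hinj hadj K :=
        Subtype.ext rfl
      rw [this, Equiv.symm_apply_apply]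
  · intro M
    apply Subtype.ext
    ext K
    simp only [Finset.mem_image, Finset.mem_attach, true_and, Subtype.exists]
    constructor
    · rintro ⟨N, hN, rfl⟩
      obtain ⟨a, ha, rfl⟩ := hN
      show ((subTransfer f hinj hadj) _ : T.Subgraph) ∈ M.1
      rw [Equiv.apply_symm_apply]
      exact ha
    · intro hK
      refine ⟨(subTransfer f hinj hadj).symm ⟨K, M.2.2 K hK⟩, ⟨K, hK, rfl⟩, ?_⟩
      show ((subTransfer f hinj hadj) _ : T.Subgraph) = K
      rw [Equiv.apply_symm_apply]
end Transfer2

section Core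
variable {VF VY VT ι : Type*} [Inhabited ι]
  (F : SimpleGraph VF) (Y : SimpleGraph VY) (T : SimpleGraph VT) (v : VT)
  (f : ι → VY → VT)

lemma matching_subset {M M' : Finset T.Subgraph} (h : IsFMatching F T M) (hs : M' ⊆ M) :
    IsFMatching F T M' :=
  ⟨fun H hH => h.1 H (hs hH), h.2.mono (by exact_mod_cast hs)⟩

variable (hinj : ∀ i, Function.Injective (f i))
  (hadj : ∀ i a b, T.Adj (f i a) (f i b) ↔ Y.Adj a b)
  (hne : ∀ H : T.Subgraph, H.IsCopyOf F → H.verts.Nonempty)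
  (hvnotin : ∀ i, v ∉ Set.range (f i))
  (hcov : ∀ H : T.Subgraph, H.IsCopyOf F → v ∈ H.verts →
    ∃ i, Disjoint (Set.range (f i)) H.verts)
  (hdich : ∀ H : T.Subgraph, H.IsCopyOf F → v ∉ H.verts →
    ∀ i, Disjoint (Set.range (f i)) H.verts ∨ H.verts ⊆ Set.range (f i))

open Classical in
noncomputable def freeIdx (H : T.Subgraph) : ι :=
  if h : ∃ i, Disjoint (Set.range (f i)) H.verts then h.choose else default

lemma freeIdx_spec {H : T.Subgraph} (h : ∃ i, Disjoint (Set.range (f i)) H.verts) :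
    Disjoint (Set.range (f (freeIdx T f H))) H.verts := by
  rw [freeIdx, dif_pos h]
  exact h.choose_spec

open Classical in
noncomputable def idxM (M : Finset T.Subgraph) : ι :=
  if h : ∃ H ∈ M, v ∈ H.verts then freeIdx T f h.choose else default

lemma idxM_eq {M : Finset T.Subgraph} (hM : IsFMatching F T M) {H : T.Subgraph}
    (hH : H ∈ M) (hv : v ∈ H.verts) : idxM T v f M = freeIdx T f H := by
  have h : ∃ H ∈ M, v ∈ H.verts := ⟨H, hH, hv⟩
  rw [idxM, dif_pos h]
  congr 1
  by_contra hne'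
  have hd := hM.2 h.choose_spec.1 hH hne'
  exact Set.disjoint_left.mp hd h.choose_spec.2 hv

lemma idxM_nocov {M : Finset T.Subgraph} (h : ¬ ∃ H ∈ M, v ∈ H.verts) :
    idxM T v f M = default := by rw [idxM, dif_neg h]

end Core

section Core2
variable {VF VY VT ι : Type*} [Inhabited ι]
  (F : SimpleGraph VF) (Y : SimpleGraph VY) (T : SimpleGraph VT) (v : VT)
  (f : ι → VY → VT)

set_option maxHeartbeats 2000000 in
theorem coreDvd
    (hinj : ∀ i, Function.Injective (f i))
    (hadj : ∀ i a b, T.Adj (f i a) (f i b) ↔ Y.Adj a b)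
    (hne : ∀ H : T.Subgraph, H.IsCopyOf F → H.verts.Nonempty)
    (hvnotin : ∀ i, v ∉ Set.range (f i))
    (hcov : ∀ H : T.Subgraph, H.IsCopyOf F → v ∈ H.verts →
      ∃ i, Disjoint (Set.range (f i)) H.verts)
    (hdich : ∀ H : T.Subgraph, H.IsCopyOf F → v ∉ H.verts →
      ∀ i, Disjoint (Set.range (f i)) H.verts ∨ H.verts ⊆ Set.range (f i)) :
    numFMatchings F Y ∣ numFMatchings F T := by
  classical
  set ψ := fun i => (matchTransfer (f i) (hinj i) (hadj i) :
      {N : Finset Y.Subgraph // IsFMatching F Y N} ≃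
        {M : Finset T.Subgraph // IsFMatching F T M ∧
          ∀ H ∈ M, H.verts ⊆ Set.range (f i)}) with hψdef
  have psi_congr : ∀ (i j : ι), i = j → ∀ (P Q : Finset T.Subgraph) (hPQ : P = Q)
      (h1 : IsFMatching F T P ∧ ∀ H ∈ P, H.verts ⊆ Set.range (f i))
      (h2 : IsFMatching F T Q ∧ ∀ H ∈ Q, H.verts ⊆ Set.range (f j)),
      (ψ i).symm ⟨P, h1⟩ = (ψ j).symm ⟨Q, h2⟩ := by
    rintro i j rfl P Q rfl h1 h2; rfl
  have psi_apply_congr : ∀ (i j : ι), i = j →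
      ∀ N : {N : Finset Y.Subgraph // IsFMatching F Y N}, ((ψ i) N).1 = ((ψ j) N).1 := by
    rintro i j rfl N; rfl
  have dich : ∀ (M : Finset T.Subgraph), IsFMatching F T M → ∀ H ∈ M,
      Disjoint (Set.range (f (idxM T v f M))) H.verts ∨
        H.verts ⊆ Set.range (f (idxM T v f M)) := by
    intro M hM H hH
    by_cases hv : v ∈ H.verts
    · left
      rw [idxM_eq F T v f hM hH hv]
      exact freeIdx_spec T f (hcov H (hM.1 H hH) hv)
    · exact hdich H (hM.1 H hH) hv _
  have excl : ∀ (H : T.Subgraph), H.IsCopyOf F → ∀ i,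
      Disjoint (Set.range (f i)) H.verts → ¬ H.verts ⊆ Set.range (f i) := by
    intro H hc i hd hsub
    obtain ⟨x, hx⟩ := hne H hc
    exact Set.disjoint_right.mp hd hx (hsub hx)
  have idx_filter : ∀ (M : Finset T.Subgraph), IsFMatching F T M →
      idxM T v f (M.filter (fun H => Disjoint (Set.range (f (idxM T v f M))) H.verts))
        = idxM T v f M := by
    intro M hM
    by_cases h : ∃ H ∈ M, v ∈ H.verts
    · obtain ⟨H, hH, hv⟩ := h
      have hi := idxM_eq F T v f hM hH hv
      have hdisj : Disjoint (Set.range (f (idxM T v f M))) H.verts := by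
        rw [hi]; exact freeIdx_spec T f (hcov H (hM.1 H hH) hv)
      have hH' : H ∈ M.filter (fun H => Disjoint (Set.range (f (idxM T v f M))) H.verts) :=
        Finset.mem_filter.mpr ⟨hH, hdisj⟩
      rw [idxM_eq F T v f (matching_subset F T hM (Finset.filter_subset _ _)) hH' hv, hi]
    · rw [idxM_nocov T v f h, idxM_nocov T v f
        (by rintro ⟨H, hH, hv⟩; exact h ⟨H, Finset.mem_of_mem_filter H hH, hv⟩)]
  have idx_union : ∀ (M₁ P : Finset T.Subgraph), IsFMatching F T (M₁ ∪ P) →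
      IsFMatching F T M₁ → (∀ H ∈ P, v ∉ H.verts) →
      idxM T v f (M₁ ∪ P) = idxM T v f M₁ := by
    intro M₁ P hMP hM₁ hP
    by_cases h : ∃ H ∈ M₁, v ∈ H.verts
    · obtain ⟨H, hH, hv⟩ := h
      rw [idxM_eq F T v f hMP (Finset.mem_union_left _ hH) hv, idxM_eq F T v f hM₁ hH hv]
    · rw [idxM_nocov T v f h, idxM_nocov T v f ?_]
      rintro ⟨H, hH, hv⟩
      rcases Finset.mem_union.mp hH with h1 | h2
      · exact h ⟨H, h1, hv⟩
      · exact hP H h2 hv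
  have union_matching : ∀ (b : {M : Finset T.Subgraph // IsFMatching F T M ∧
        ∀ H ∈ M, Disjoint (Set.range (f (idxM T v f M))) H.verts})
      (N : {N : Finset Y.Subgraph // IsFMatching F Y N}),
      IsFMatching F T (b.1 ∪ ((ψ (idxM T v f b.1)) N).1) := by
    intro b N
    set i := idxM T v f b.1 with hi
    have hP := ((ψ i) N).2
    constructor
    · intro H hH
      rcases Finset.mem_union.mp hH with h | h
      · exact b.2.1.1 H h
      · exact hP.1.1 H h
    · rw [Finset.coe_union]
      intro H hH K hK hne'
      rcases hH with h1 | h1 <;> rcases hK with h2 | h2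
      · exact b.2.1.2 h1 h2 hne'
      · exact (b.2.2 H (Finset.mem_coe.mp h1)).symm.mono_right (hP.2 K (Finset.mem_coe.mp h2))
      · exact ((b.2.2 K (Finset.mem_coe.mp h2)).symm.mono_right
          (hP.2 H (Finset.mem_coe.mp h1))).symm
      · exact hP.1.2 h1 h2 hne'
  let E : {M : Finset T.Subgraph // IsFMatching F T M} ≃
      {M : Finset T.Subgraph // IsFMatching F T M ∧
        ∀ H ∈ M, Disjoint (Set.range (f (idxM T v f M))) H.verts} ×
      {N : Finset Y.Subgraph // IsFMatching F Y N} := by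
    refine
      { toFun := fun M =>
          (⟨M.1.filter (fun H => Disjoint (Set.range (f (idxM T v f M.1))) H.verts), ?_, ?_⟩,
            (ψ (idxM T v f M.1)).symm
              ⟨M.1.filter (fun H => H.verts ⊆ Set.range (f (idxM T v f M.1))), ?_, ?_⟩)
        invFun := fun p => ⟨p.1.1 ∪ ((ψ (idxM T v f p.1.1)) p.2).1, ?_, ?_⟩
        left_inv := ?_
        right_inv := ?_ }
    · exact matching_subset F T M.2 (Finset.filter_subset _ _)
    · intro H hH
      rw [idx_filter M.1 M.2]
      exact (Finset.mem_filter.mp hH).2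
    · exact matching_subset F T M.2 (Finset.filter_subset _ _)
    · intro H hH
      exact (Finset.mem_filter.mp hH).2
    · exact (union_matching p.1 p.2).1
    · exact (union_matching p.1 p.2).2
    · -- left inverse
      intro M
      apply Subtype.ext
      have hfil := idx_filter M.1 M.2
      dsimp only
      rw [psi_apply_congr _ _ hfil, Equiv.apply_symm_apply]
      ext H
      simp only [Finset.mem_union, Finset.mem_filter]
      constructor
      · rintro (⟨h, _⟩ | ⟨h, _⟩) <;> exact h
      · intro h
        rcases dich M.1 M.2 H h with hd | hs
        · exact Or.inl ⟨h, hd⟩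
        · exact Or.inr ⟨h, hs⟩
    · -- right inverse
      rintro ⟨b, N⟩
      dsimp only
      set i := idxM T v f b.1 with hi
      set P := ((ψ i) N).1 with hPdef
      have hP : IsFMatching F T P ∧ ∀ H ∈ P, H.verts ⊆ Set.range (f i) := ((ψ i) N).2
      have hPnocov : ∀ H ∈ P, v ∉ H.verts := fun H hH hv => hvnotin i (hP.2 H hH hv)
      have hi' : idxM T v f (b.1 ∪ P) = i :=
        idx_union b.1 P (union_matching b N) b.2.1 hPnocov
      have filter1 : (b.1 ∪ P).filter
          (fun H => Disjoint (Set.range (f (idxM T v f (b.1 ∪ P)))) H.verts) = b.1 := by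
        rw [hi']
        ext H
        simp only [Finset.mem_filter, Finset.mem_union]
        constructor
        · rintro ⟨h1 | h1, h2⟩
          · exact h1
          · exact absurd (hP.2 H h1) (excl H (hP.1.1 H h1) i h2)
        · intro h
          exact ⟨Or.inl h, b.2.2 H h⟩
      have filter2 : (b.1 ∪ P).filter
          (fun H => H.verts ⊆ Set.range (f (idxM T v f (b.1 ∪ P)))) = P := by
        rw [hi']
        ext H
        simp only [Finset.mem_filter, Finset.mem_union]
        constructor
        · rintro ⟨h1 | h1, h2⟩
          · exact absurd h2 (excl H (b.2.1.1 H h1) i (b.2.2 H h1))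
          · exact h1
        · intro h
          exact ⟨Or.inr h, hP.2 H h⟩
      refine Prod.ext ?_ ?_
      · exact Subtype.ext filter1
      · refine (psi_congr _ _ hi' _ P filter2 _ hP).trans ?_
        exact (congrArg (ψ i).symm (Subtype.ext (rfl : P = ((ψ i) N).1))).trans
          (Equiv.symm_apply_apply _ _)
  have h1 : numFMatchings F T = Nat.card {M : Finset T.Subgraph // IsFMatching F T M} := by
    rw [numFMatchings, ← Nat.card_coe_set_eq]; rfl
  have h2 : numFMatchings F Y = Nat.card {N : Finset Y.Subgraph // IsFMatching F Y N} := by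
    rw [numFMatchings, ← Nat.card_coe_set_eq]; rfl
  rw [h1, Nat.card_congr E, Nat.card_prod, ← h2]
  exact dvd_mul_left _ _
end Core2

lemma walk_cross {V : Type*} {G : SimpleGraph V} {P : Set V} :
    ∀ {x y : V}, G.Walk x y → x ∈ P → y ∉ P → ∃ a b, G.Adj a b ∧ a ∈ P ∧ b ∉ P := by
  intro x y w
  induction w with
  | nil => intro hx hy; exact absurd hx hy
  | @cons a b c h p ih =>
    intro hx hy
    by_cases hb : b ∈ P
    · exact ih hb hy
    · exact ⟨a, b, h, hx, hb⟩


/-- Lemma 2.2 of the paper: let `F` be a tree with at least one edge, `m > 0`,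
and `Y` a tree with `m ∣ s(F,Y)`.  If a tree `T` has an edge `{u,v}` such that
`T^{(u,v)}` — the component of `v` in `T` minus the edge `{u,v}`, rooted at
`v` — is isomorphic (as a rooted tree) to the nullifying tree `Z` built from
`Δ(F) + 1` copies of `Y`, then `m ∣ s(F,T)`. -/
theorem dvd_numFMatchings_of_nullifying_leaf
    {VF VY VT : Type*} [Fintype VF] [Fintype VY] [Fintype VT]
    (F : SimpleGraph VF) [DecidableRel F.Adj]
    (hF : F.IsTree) (hFe : F.edgeSet.Nonempty)
    (m : ℕ) (hm : 0 < m)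
    (Y : SimpleGraph VY) (hY : Y.IsTree) (hYm : m ∣ numFMatchings F Y)
    (y₀ : Fin (F.maxDegree + 1) → VY)
    (T : SimpleGraph VT) (hT : T.IsTree) (u v : VT) (huv : T.Adj u v)
    (e : SimpleGraph.induce (((T.deleteEdges {s(u, v)}).connectedComponentMk v).supp) T
        ≃g nullifyingTree F.maxDegree Y y₀)
    (he : e ⟨v, rfl⟩ = none) :
    m ∣ numFMatchings F T := by
  classical
  have hvS : v ∈ (((T.deleteEdges {s(u, v)}).connectedComponentMk v).supp) := rfl
  set f : Fin (F.maxDegree + 1) → VY → VT := fun i y => (e.symm (some (i, y))).1 with hfdef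
  have hfS : ∀ i y, f i y ∈ (((T.deleteEdges {s(u, v)}).connectedComponentMk v).supp) := fun i y => (e.symm (some (i, y))).2
  have hmk : ∀ i y, (⟨f i y, hfS i y⟩ : (((T.deleteEdges {s(u, v)}).connectedComponentMk v).supp)) = e.symm (some (i, y)) :=
    fun i y => Subtype.ext rfl
  have hef : ∀ i y, e ⟨f i y, hfS i y⟩ = some (i, y) := by
    intro i y; rw [hmk]; exact e.apply_symm_apply _
  have hvnone : e.symm none = ⟨v, hvS⟩ := by rw [← he]; exact e.symm_apply_apply _
  have hfinj : ∀ {i a j b}, f i a = f j b → i = j ∧ a = b := by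
    intro i a j b h
    have h1 : e.symm (some (i, a)) = e.symm (some (j, b)) := Subtype.ext h
    have h2 := e.symm.injective h1
    simp only [Option.some.injEq, Prod.mk.injEq] at h2
    exact h2
  have hfv : ∀ i y, f i y ≠ v := by
    intro i y h
    have h1 : e.symm (some (i, y)) = e.symm none := by
      rw [hvnone]; exact Subtype.ext h
    simpa using e.symm.injective h1
  have hvnotin : ∀ i, v ∉ Set.range (f i) := by
    rintro i ⟨y, hy⟩; exact hfv i y hy
  have hinj : ∀ i, Function.Injective (f i) := fun i a b h => (hfinj h).2
  have hadj : ∀ i a b, T.Adj (f i a) (f i b) ↔ Y.Adj a b := by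
    intro i a b
    have h1 : T.Adj (f i a) (f i b) ↔
        (SimpleGraph.induce (((T.deleteEdges {s(u, v)}).connectedComponentMk v).supp) T).Adj ⟨f i a, hfS i a⟩ ⟨f i b, hfS i b⟩ := Iff.rfl
    rw [h1, hmk, hmk, e.symm.map_rel_iff]
    show (nullifyingTree F.maxDegree Y y₀).Adj (some (i, a)) (some (i, b)) ↔ _
    rw [nullifyingTree, SimpleGraph.fromRel_adj]
    constructor
    · rintro ⟨hne', (⟨_, h⟩ | ⟨_, h⟩)⟩
      · exact h
      · exact h.symm
    · intro h
      refine ⟨by simp [h.ne], Or.inl ⟨rfl, h⟩⟩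
  have S1 : ∀ x ∈ (((T.deleteEdges {s(u, v)}).connectedComponentMk v).supp), ∀ w, T.Adj x w → w ∉ (((T.deleteEdges {s(u, v)}).connectedComponentMk v).supp) → x = v ∧ w = u := by
    intro x hx w hxw hw
    have hd : ¬ (T.deleteEdges {s(u, v)}).Adj x w := by
      intro h
      apply hw
      show (T.deleteEdges {s(u, v)}).connectedComponentMk w = _
      exact (SimpleGraph.ConnectedComponent.sound h.symm.reachable).trans hx
    rw [SimpleGraph.deleteEdges_adj] at hd
    push_neg at hd
    have := hd hxw
    simp only [Set.mem_singleton_iff, Sym2.eq, Sym2.rel_iff', Prod.mk.injEq,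
      Prod.swap_prod_mk] at this
    rcases this with ⟨h1, h2⟩ | ⟨h1, h2⟩
    · subst h2; exact absurd hvS hw
    · exact ⟨h1, h2⟩
  have hB3 : ∀ i x w, x ∈ Set.range (f i) → w ∉ Set.range (f i) → T.Adj x w →
      x = f i (y₀ i) ∧ w = v := by
    rintro i x w ⟨y, rfl⟩ hw hxw
    by_cases hwS : w ∈ (((T.deleteEdges {s(u, v)}).connectedComponentMk v).supp)
    · have hadj' : (SimpleGraph.induce (((T.deleteEdges {s(u, v)}).connectedComponentMk v).supp) T).Adj ⟨f i y, hfS i y⟩ ⟨w, hwS⟩ := hxw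
      have hq : (⟨w, hwS⟩ : (((T.deleteEdges {s(u, v)}).connectedComponentMk v).supp)) = e.symm (e ⟨w, hwS⟩) := (e.symm_apply_apply _).symm
      rw [hmk, hq, e.symm.map_rel_iff] at hadj'
      rcases hqe : e ⟨w, hwS⟩ with _ | ⟨j, y'⟩
      · rw [hqe] at hadj'
        rw [nullifyingTree, SimpleGraph.fromRel_adj] at hadj'
        obtain ⟨-, h | h⟩ := hadj'
        · exact absurd h (by simp)
        · simp only at h
          subst h
          constructor
          · rfl
          · have : (⟨w, hwS⟩ : (((T.deleteEdges {s(u, v)}).connectedComponentMk v).supp)) = ⟨v, hvS⟩ := by rw [hq, hqe, hvnone]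
            exact congrArg Subtype.val this
      · exfalso
        rw [hqe] at hadj'
        rw [nullifyingTree, SimpleGraph.fromRel_adj] at hadj'
        obtain ⟨-, h | h⟩ := hadj'
        · obtain ⟨rfl, -⟩ := h
          apply hw
          refine ⟨y', ?_⟩
          have : (⟨w, hwS⟩ : (((T.deleteEdges {s(u, v)}).connectedComponentMk v).supp)) = e.symm (some (i, y')) := by rw [hq, hqe]
          exact (congrArg Subtype.val this).symm
        · obtain ⟨rfl, -⟩ := h
          apply hw
          refine ⟨y', ?_⟩
          have : (⟨w, hwS⟩ : (((T.deleteEdges {s(u, v)}).connectedComponentMk v).supp)) = e.symm (some (j, y')) := by rw [hq, hqe]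
          exact (congrArg Subtype.val this).symm
    · obtain ⟨h1, -⟩ := S1 (f i y) (hfS i y) w hxw hwS
      exact absurd h1 (hfv i y)
  have hcoe_conn : ∀ H : T.Subgraph, H.IsCopyOf F → H.coe.Connected := by
    rintro H ⟨φ⟩
    exact φ.connected_iff.mpr hF.isConnected
  have cross : ∀ (H : T.Subgraph), H.coe.Connected → ∀ i x, x ∈ H.verts →
      x ∈ Set.range (f i) → ∀ z, z ∈ H.verts → z ∉ Set.range (f i) →
      H.Adj (f i (y₀ i)) v := by
    intro H hc i x hx hxr z hz hzr
    obtain ⟨w⟩ := hc.preconnected ⟨x, hx⟩ ⟨z, hz⟩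
    obtain ⟨a, b, hab, ha, hb⟩ :=
      walk_cross (P := {p : H.verts | p.1 ∈ Set.range (f i)}) w hxr hzr
    have hab' : H.Adj a.1 b.1 := hab
    obtain ⟨h1, h2⟩ := hB3 i a.1 b.1 ha hb (H.adj_sub hab')
    rwa [h1, h2] at hab'
  have hne : ∀ H : T.Subgraph, H.IsCopyOf F → H.verts.Nonempty := by
    rintro H ⟨φ⟩
    have : Nonempty VF := ⟨hFe.choose.out.1⟩
    obtain ⟨a⟩ := this
    exact ⟨(φ.symm a).1, (φ.symm a).2⟩
  have hdich : ∀ H : T.Subgraph, H.IsCopyOf F → v ∉ H.verts →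
      ∀ i, Disjoint (Set.range (f i)) H.verts ∨ H.verts ⊆ Set.range (f i) := by
    intro H hc hvH i
    by_cases hd : Disjoint (Set.range (f i)) H.verts
    · exact Or.inl hd
    · right
      obtain ⟨x, hxr, hxv⟩ := Set.not_disjoint_iff.mp hd
      intro z hz
      by_contra hzr
      have := cross H (hcoe_conn H hc) i x hxv hxr z hz hzr
      exact hvH (H.edge_vert this.symm)
  have hcov : ∀ H : T.Subgraph, H.IsCopyOf F → v ∈ H.verts →
      ∃ i, Disjoint (Set.range (f i)) H.verts := by
    intro H hc hvH
    by_contra hno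
    push_neg at hno
    have hAdj : ∀ i, H.Adj v (f i (y₀ i)) := by
      intro i
      obtain ⟨x, hxr, hxv⟩ := Set.not_disjoint_iff.mp (hno i)
      exact (cross H (hcoe_conn H hc) i x hxv hxr v hvH (hvnotin i)).symm
    obtain ⟨φ⟩ := hc
    have hinj2 : Function.Injective (fun i : Fin (F.maxDegree + 1) =>
        (⟨⟨f i (y₀ i), H.edge_vert (hAdj i).symm⟩, hAdj i⟩ :
          H.coe.neighborSet ⟨v, hvH⟩)) := by
      intro i j h
      have : f i (y₀ i) = f j (y₀ j) := congrArg (fun z => z.1.1) h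
      exact (hfinj this).1
    have hcard : F.maxDegree + 1 ≤ Nat.card (H.coe.neighborSet ⟨v, hvH⟩) := by
      have h := Nat.card_le_card_of_injective _ hinj2
      rwa [Nat.card_eq_fintype_card (α := Fin (F.maxDegree + 1)), Fintype.card_fin] at h
    have hcard2 : Nat.card (H.coe.neighborSet ⟨v, hvH⟩) = F.degree (φ ⟨v, hvH⟩) := by
      rw [Nat.card_congr (φ.mapNeighborSet _), Nat.card_eq_fintype_card]
      exact F.card_neighborSet_eq_degree _
    have hdeg := F.degree_le_maxDegree (φ ⟨v, hvH⟩)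
    rw [hcard2] at hcard
    omega
  exact hYm.trans (coreDvd F Y T v f hinj hadj hne hvnotin hcov hdich)
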